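/- Let X ∈ F with γ_max(X) > 0. Then X − D(X)/γ_max(X) ⪰ O and I − X + D(X)/γ_max(X) ⪰ O; that is, X − D(X)/γ_max(X) ∈ F. -/

import Mathlib

set_option autoImplicit false

open Matrix Set Filter

attribute [local instance] Matrix.normedAddCommGroup Matrix.normedSpace

namespace BoxSDP

open scoped Classical

/-- Trace inner product `⟨A|B⟩ = Trace(Aᵀ B)`. -/
noncomputable def mip {m k : Type*} [Fintype m] [Fintype k]
    (A B : Matrix m k ℝ) : ℝ :=
  (Aᵀ * B).trace

/-- Frobenius norm `‖A‖_F = √⟨A|A⟩`. -/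
noncomputable def fnorm {m k : Type*} [Fintype m] [Fintype k]
    (A : Matrix m k ℝ) : ℝ :=
  Real.sqrt (mip A A)

/-- The feasible set `F = {X : O ⪯ X ⪯ I}` (membership forces symmetry). -/
def Feas (n : ℕ) : Set (Matrix (Fin n) (Fin n) ℝ) :=
  {X | X.PosSemidef ∧ (1 - X).PosSemidef}

/-- Square root of a positive semidefinite matrix (junk value `0` otherwise);
agrees with `A^{1/2} = Q K^{1/2} Qᵀ` on positive semidefinite matrices. -/
noncomputable def psqrt {m : Type*} [Fintype m] [DecidableEq m]
    (A : Matrix m m ℝ) : Matrix m m ℝ :=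
  if h : A.PosSemidef then
    (h.1.eigenvectorUnitary : Matrix m m ℝ) * diagonal ((↑) ∘ (√·) ∘ h.1.eigenvalues) *
      (star h.1.eigenvectorUnitary : Matrix m m ℝ) else 0

/-- Fourth root `A^{1/4}` of a positive semidefinite matrix. -/
noncomputable def proot4 {m : Type*} [Fintype m] [DecidableEq m]
    (A : Matrix m m ℝ) : Matrix m m ℝ :=
  psqrt (psqrt A)

/-- The 2-norm of a symmetric matrix: its largest absolute eigenvalue. -/
noncomputable def norm2 {m : Type*} [Fintype m] [DecidableEq m]
    (A : Matrix m m ℝ) : ℝ :=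
  if h : A.IsHermitian then sSup (Set.range fun i => |h.eigenvalues i|) else 0

/-- The linear functional `H ↦ ⟨G|H⟩`, as a continuous linear map; a function
`f` has gradient matrix `G` at `X` iff `HasFDerivAt f (gradCLM G) X`. -/
noncomputable def gradCLM {n : ℕ} (G : Matrix (Fin n) (Fin n) ℝ) :
    Matrix (Fin n) (Fin n) ℝ →L[ℝ] ℝ :=
  LinearMap.toContinuousLinearMap
    { toFun := fun H => mip G H
      map_add' := fun x y => by
        simp [mip, Matrix.mul_add]
      map_smul' := fun c x => by
        simp [mip, Matrix.mul_smul] }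

/-- The Hessian bilinear form `⟨A | ∇²f(X) | B⟩` induced by the derivative
`hessOp` of the gradient map. -/
noncomputable def hform {n : ℕ}
    (hessOp : Matrix (Fin n) (Fin n) ℝ →L[ℝ] Matrix (Fin n) (Fin n) ℝ)
    (A B : Matrix (Fin n) (Fin n) ℝ) : ℝ :=
  mip A (hessOp B)

/-- `underline-f`: the minimum of `⟨G | Y − X̂⟩` over `Y ∈ F`. -/
noncomputable def underf {n : ℕ} (G Xh : Matrix (Fin n) (Fin n) ℝ) : ℝ :=
  sInf ((fun Y => mip G (Y - Xh)) '' Feas n)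

/-- First-order optimality condition at `Xs` for gradient matrix `G`. -/
def FirstOrderOpt {n : ℕ} (G Xs : Matrix (Fin n) (Fin n) ℝ) : Prop :=
  ∀ X ∈ Feas n, 0 ≤ mip G (X - Xs)


section Helpers

/-- Square root of a positive semidefinite matrix. -/
protected noncomputable def _root_.Matrix.PosSemidef.sqrt {m : Type*} [Fintype m] [DecidableEq m]
    {A : Matrix m m ℝ} (h : A.PosSemidef) : Matrix m m ℝ :=
  (h.1.eigenvectorUnitary : Matrix m m ℝ) * diagonal ((↑) ∘ (√·) ∘ h.1.eigenvalues) *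
    (star h.1.eigenvectorUnitary : Matrix m m ℝ)

lemma _root_.Matrix.PosSemidef.sqrt_mul_self {m : Type*} [Fintype m] [DecidableEq m]
    {A : Matrix m m ℝ} (hA : A.PosSemidef) : hA.sqrt * hA.sqrt = A := by
  unfold Matrix.PosSemidef.sqrt
  have hUU : (star hA.1.eigenvectorUnitary : Matrix m m ℝ) * (hA.1.eigenvectorUnitary : Matrix m m ℝ) = 1 :=
    Unitary.coe_star_mul_self _
  simp only [Matrix.mul_assoc]
  rw [← Matrix.mul_assoc (star hA.1.eigenvectorUnitary : Matrix m m ℝ) _, hUU, Matrix.one_mul,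
    ← Matrix.mul_assoc (diagonal _), diagonal_mul_diagonal]
  conv_rhs => rw [hA.1.spectral_theorem]
  rw [Unitary.conjStarAlgAut_apply, Matrix.mul_assoc]
  congr 3
  funext i
  simp [Real.mul_self_sqrt (hA.eigenvalues_nonneg i)]

lemma _root_.Matrix.PosSemidef.posSemidef_sqrt {m : Type*} [Fintype m] [DecidableEq m]
    {A : Matrix m m ℝ} (hA : A.PosSemidef) : hA.sqrt.PosSemidef := by
  unfold Matrix.PosSemidef.sqrt
  have hD : (diagonal ((↑) ∘ (√·) ∘ hA.1.eigenvalues) : Matrix m m ℝ).PosSemidef :=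
    Matrix.posSemidef_diagonal_iff.mpr fun i => Real.sqrt_nonneg _
  have h := hD.mul_mul_conjTranspose_same (hA.1.eigenvectorUnitary : Matrix m m ℝ)
  rwa [← Matrix.star_eq_conjTranspose, ← Unitary.coe_star] at h

lemma psqrt_eq {m : Type*} [Fintype m] [DecidableEq m] {A : Matrix m m ℝ}
    (hA : A.PosSemidef) : psqrt A = hA.sqrt := by
  unfold psqrt; rw [dif_pos hA]; rfl

lemma abs_eig_le_norm2 {m : Type*} [Fintype m] [DecidableEq m] {G : Matrix m m ℝ}
    (hG : G.IsHermitian) {v : m → ℝ} (hv : v ≠ 0) {c : ℝ} (h : G *ᵥ v = c • v) :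
    |c| ≤ norm2 G := by
  set U := (hG.eigenvectorUnitary : Matrix m m ℝ) with hU
  have hUs : U * star U = 1 := (Matrix.mem_unitaryGroup_iff).mp hG.eigenvectorUnitary.2
  set w := star U *ᵥ v with hw_def
  have hvw : U *ᵥ w = v := by
    rw [hw_def, Matrix.mulVec_mulVec, hUs, Matrix.one_mulVec]
  have hw : w ≠ 0 := by
    intro h0
    exact hv (by rw [← hvw, h0, Matrix.mulVec_zero])
  have hdiag : Matrix.diagonal (RCLike.ofReal ∘ hG.eigenvalues) *ᵥ w = c • w := by
    rw [← hG.conjStarAlgAut_star_eigenvectorUnitary, Unitary.conjStarAlgAut_star_apply]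
    calc (star U * G * U) *ᵥ w = star U *ᵥ (G *ᵥ (U *ᵥ w)) := by
          simp [Matrix.mulVec_mulVec, Matrix.mul_assoc]
      _ = star U *ᵥ (c • v) := by rw [hvw, h]
      _ = c • w := by rw [Matrix.mulVec_smul, hw_def]
  obtain ⟨k, hk⟩ := Function.ne_iff.mp hw
  have hk2 : (RCLike.ofReal ∘ hG.eigenvalues) k * w k = c * w k := by
    have := congrFun hdiag k
    rwa [Matrix.mulVec_diagonal] at this
  have hc : c = hG.eigenvalues k := by
    have := mul_right_cancel₀ hk hk2
    simpa using this.symm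
  rw [norm2, dif_pos hG, hc]
  exact le_csSup ((Set.finite_range _).bddAbove) ⟨k, rfl⟩

lemma psd_tconj {l m : Type*} [Fintype l] [Fintype m] {A : Matrix l l ℝ}
    (hA : A.PosSemidef) (B : Matrix l m ℝ) : (Bᵀ * A * B).PosSemidef := by
  have h := hA.conjTranspose_mul_mul_same B
  rwa [Matrix.conjTranspose_eq_transpose_of_trivial] at h

lemma psd_conj {l m : Type*} [Fintype l] [Fintype m] {A : Matrix m m ℝ}
    (hA : A.PosSemidef) (B : Matrix l m ℝ) : (B * A * Bᵀ).PosSemidef := by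
  have h := hA.mul_mul_conjTranspose_same B
  rwa [Matrix.conjTranspose_eq_transpose_of_trivial] at h

lemma smul_sandwich {m : Type*} [Fintype m] [DecidableEq m]
    (s : Matrix m m ℝ) (c : ℝ) (g : m → ℝ) :
    c • (s * Matrix.diagonal g * s) = s * Matrix.diagonal (fun i => c * g i) * s := by
  have h : (fun i => c * g i) = c • g := rfl
  rw [h, Matrix.diagonal_smul, Matrix.mul_smul, Matrix.smul_mul]

lemma neg_sandwich {m : Type*} [Fintype m] [DecidableEq m]
    (s : Matrix m m ℝ) (g : m → ℝ) :
    -(s * Matrix.diagonal g * s) = s * Matrix.diagonal (fun i => -(g i)) * s := by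
  rw [← Matrix.diagonal_neg, Matrix.mul_neg, Matrix.neg_mul]

lemma sqrt_sandwich_add {m : Type*} [Fintype m] [DecidableEq m] {A : Matrix m m ℝ}
    (hA : A.PosSemidef) (d : m → ℝ) :
    A + hA.sqrt * Matrix.diagonal d * hA.sqrt
      = hA.sqrt * Matrix.diagonal (fun i => 1 + d i) * hA.sqrt := by
  have h : Matrix.diagonal (fun i => 1 + d i)
      = 1 + Matrix.diagonal d := by
    rw [← Matrix.diagonal_one, ← Matrix.diagonal_add]
  rw [h, Matrix.mul_add, Matrix.add_mul, Matrix.mul_one, hA.sqrt_mul_self]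

lemma sqrt_sandwich_sub {m : Type*} [Fintype m] [DecidableEq m] {A : Matrix m m ℝ}
    (hA : A.PosSemidef) (d : m → ℝ) :
    A - hA.sqrt * Matrix.diagonal d * hA.sqrt
      = hA.sqrt * Matrix.diagonal (fun i => 1 - d i) * hA.sqrt := by
  have h : Matrix.diagonal (fun i => 1 - d i)
      = 1 - Matrix.diagonal d := by
    rw [← Matrix.diagonal_one, ← Matrix.diagonal_sub]
  rw [h, Matrix.mul_sub, Matrix.sub_mul, Matrix.mul_one, hA.sqrt_mul_self]

lemma sandwich_psd {m : Type*} [Fintype m] [DecidableEq m] {A : Matrix m m ℝ}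
    (hA : A.PosSemidef) (d : m → ℝ) (hd : ∀ i, 0 ≤ d i) :
    (hA.sqrt * Matrix.diagonal d * hA.sqrt).PosSemidef := by
  have h := (Matrix.posSemidef_diagonal_iff.mpr hd).mul_mul_conjTranspose_same hA.sqrt
  rwa [hA.posSemidef_sqrt.1] at h

lemma col_eigvec {N K : Type*} [Fintype N] [Fintype K] [DecidableEq K]
    {G : Matrix N N ℝ} {P : Matrix N K ℝ} {g : K → ℝ}
    (hGP : G * P = P * Matrix.diagonal g) (hP : Pᵀ * P = 1) (i : K) :
    G *ᵥ (fun r => P r i) = g i • (fun r => P r i) ∧ (fun r => P r i) ≠ (0 : N → ℝ) := by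
  constructor
  · funext r
    have h1 : (G * P) r i = (P * Matrix.diagonal g) r i := by rw [hGP]
    rw [Matrix.mul_diagonal] at h1
    simpa [Matrix.mulVec, Matrix.mul_apply, dotProduct, mul_comm] using h1
  · intro h0
    have h1 := congrFun (congrFun hP i) i
    rw [Matrix.mul_apply] at h1
    have h2 : ∀ j, Pᵀ i j * P j i = 0 := fun j => by
      have hz : P j i = 0 := congrFun h0 j
      rw [hz, mul_zero]
    rw [Finset.sum_congr rfl (fun j _ => h2 j), Finset.sum_const_zero] at h1
    simp [Matrix.one_apply] at h1

end Helpers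

/-- A fixed eigenvalue decomposition `G = P Γ Pᵀ` of a symmetric matrix `G`,
with eigenvalues in descending order, split into the block `Pp, gp` of
positive eigenvalues and the block `Pm, gm` of nonpositive eigenvalues. -/
structure SpecDecomp (n : ℕ) (G : Matrix (Fin n) (Fin n) ℝ) where
  np : ℕ
  nm : ℕ
  hdim : np + nm = n
  Pp : Matrix (Fin n) (Fin np) ℝ
  Pm : Matrix (Fin n) (Fin nm) ℝ
  gp : Fin np → ℝ
  gm : Fin nm → ℝ
  hgp_pos : ∀ i, 0 < gp i
  hgm_nonpos : ∀ j, gm j ≤ 0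
  hgp_anti : ∀ i j : Fin np, i ≤ j → gp j ≤ gp i
  hgm_anti : ∀ i j : Fin nm, i ≤ j → gm j ≤ gm i
  hPp_orth : Ppᵀ * Pp = 1
  hPm_orth : Pmᵀ * Pm = 1
  hPpPm : Ppᵀ * Pm = 0
  hPPT : Pp * Ppᵀ + Pm * Pmᵀ = 1
  hG : G = Pp * Matrix.diagonal gp * Ppᵀ + Pm * Matrix.diagonal gm * Pmᵀ

namespace SpecDecomp

variable {n : ℕ} {G : Matrix (Fin n) (Fin n) ℝ}

/-- `V₊(X) = P₊ᵀ X P₊`. -/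
def Vp (sd : SpecDecomp n G) (X : Matrix (Fin n) (Fin n) ℝ) :
    Matrix (Fin sd.np) (Fin sd.np) ℝ :=
  sd.Ppᵀ * X * sd.Pp

/-- `V₋(X) = P₋ᵀ (I − X) P₋`. -/
def Vm (sd : SpecDecomp n G) (X : Matrix (Fin n) (Fin n) ℝ) :
    Matrix (Fin sd.nm) (Fin sd.nm) ℝ :=
  sd.Pmᵀ * (1 - X) * sd.Pm

/-- The search direction `D(X) = P M Pᵀ` with blocks
`M₁₁ = V₊^{1/2} Γ₊ V₊^{1/2}`, `M₁₂ = γ_max P₊ᵀ X P₋`,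
`M₂₁ = γ_max P₋ᵀ X P₊`, `M₂₂ = V₋^{1/2} Γ₋ V₋^{1/2}`. -/
noncomputable def Dmat (sd : SpecDecomp n G) (X : Matrix (Fin n) (Fin n) ℝ) :
    Matrix (Fin n) (Fin n) ℝ :=
  sd.Pp * (psqrt (sd.Vp X) * Matrix.diagonal sd.gp * psqrt (sd.Vp X)) * sd.Ppᵀ
    + norm2 G • (sd.Pp * (sd.Ppᵀ * X * sd.Pm) * sd.Pmᵀ)
    + norm2 G • (sd.Pm * (sd.Pmᵀ * X * sd.Pp) * sd.Ppᵀ)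
    + sd.Pm * (psqrt (sd.Vm X) * Matrix.diagonal sd.gm * psqrt (sd.Vm X)) * sd.Pmᵀ

/-- `N(X) = ⟨G | D(X)⟩`. -/
noncomputable def Nval (sd : SpecDecomp n G) (X : Matrix (Fin n) (Fin n) ℝ) : ℝ :=
  mip G (sd.Dmat X)

end SpecDecomp

theorem step_by_gammaMax_mem_Feas {n : ℕ}
    (f : Matrix (Fin n) (Fin n) ℝ → ℝ)
    (grad : Matrix (Fin n) (Fin n) ℝ → Matrix (Fin n) (Fin n) ℝ)
    (hgradsym : ∀ X ∈ Feas n, (grad X).IsSymm)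
    (hgrad : ∀ X ∈ Feas n, HasFDerivAt f (gradCLM (grad X)) X)
    (X : Matrix (Fin n) (Fin n) ℝ) (hX : X ∈ Feas n)
    (sd : SpecDecomp n (grad X))
    (hγ : 0 < norm2 (grad X)) :
    (X - (norm2 (grad X))⁻¹ • sd.Dmat X).PosSemidef ∧
      (1 - X + (norm2 (grad X))⁻¹ • sd.Dmat X).PosSemidef ∧
      X - (norm2 (grad X))⁻¹ • sd.Dmat X ∈ Feas n := by
  classical
  obtain ⟨hX0, hX1⟩ := hX
  have hGsym : (grad X).IsSymm := hgradsym X ⟨hX0, hX1⟩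
  clear hgrad hgradsym
  revert hGsym sd hγ
  generalize grad X = Gr
  intro sd hγ hGsym
  have hGherm : Gr.IsHermitian := by
    rw [Matrix.IsHermitian, Matrix.conjTranspose_eq_transpose_of_trivial]
    exact hGsym
  set γ := norm2 Gr with hγdef
  have hγ0 : γ ≠ 0 := ne_of_gt hγ
  -- eigen-equations for the blocks
  have hPmtPp : sd.Pmᵀ * sd.Pp = 0 := by
    have h := congrArg Matrix.transpose sd.hPpPm
    simpa [Matrix.transpose_mul] using h
  have hGPp : Gr * sd.Pp = sd.Pp * Matrix.diagonal sd.gp := by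
    have h := congrArg (fun M => M * sd.Pp) sd.hG
    rw [h]
    simp [Matrix.add_mul, Matrix.mul_assoc, sd.hPp_orth, hPmtPp]
  have hGPm : Gr * sd.Pm = sd.Pm * Matrix.diagonal sd.gm := by
    have h := congrArg (fun M => M * sd.Pm) sd.hG
    rw [h]
    simp [Matrix.add_mul, Matrix.mul_assoc, sd.hPm_orth, sd.hPpPm]
  have hgp_le : ∀ i, sd.gp i ≤ γ := by
    intro i
    obtain ⟨he, hv⟩ := col_eigvec hGPp sd.hPp_orth i
    exact le_trans (le_abs_self _) (abs_eig_le_norm2 hGherm hv he)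
  have hgm_ge : ∀ j, -γ ≤ sd.gm j := by
    intro j
    obtain ⟨he, hv⟩ := col_eigvec hGPm sd.hPm_orth j
    have h := abs_eig_le_norm2 hGherm hv he
    have := neg_abs_le (sd.gm j)
    linarith
  -- PSD ingredients
  have hA : (sd.Vp X).PosSemidef := psd_tconj hX0 sd.Pp
  have hW : (sd.Vm X).PosSemidef := psd_tconj hX1 sd.Pm
  set sqA := hA.sqrt with hsqA
  set sqW := hW.sqrt with hsqW
  set Ap := sd.Ppᵀ * X * sd.Pp with hAp
  set Cm := sd.Pmᵀ * X * sd.Pm with hCm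
  set B1 := sd.Ppᵀ * X * sd.Pm with hB1
  set B2 := sd.Pmᵀ * X * sd.Pp with hB2
  have hApV : Ap = sd.Vp X := hAp
  have hCmV : (1 : Matrix (Fin sd.nm) (Fin sd.nm) ℝ) - Cm = sd.Vm X := by
    rw [hCm]
    show _ = sd.Pmᵀ * (1 - X) * sd.Pm
    rw [Matrix.mul_sub, Matrix.sub_mul, Matrix.mul_one, sd.hPm_orth]
  have hCpsd : Cm.PosSemidef := by rw [hCm]; exact psd_tconj hX0 sd.Pm
  have hIAp : ((1 : Matrix (Fin sd.np) (Fin sd.np) ℝ) - Ap).PosSemidef := by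
    have h : (1 : Matrix (Fin sd.np) (Fin sd.np) ℝ) - Ap = sd.Ppᵀ * (1 - X) * sd.Pp := by
      rw [hAp, Matrix.mul_sub, Matrix.sub_mul, Matrix.mul_one, sd.hPp_orth]
    rw [h]; exact psd_tconj hX1 sd.Pp
  -- expand Dmat
  have hDmat : sd.Dmat X
      = sd.Pp * (sqA * Matrix.diagonal sd.gp * sqA) * sd.Ppᵀ
        + γ • (sd.Pp * B1 * sd.Pmᵀ) + γ • (sd.Pm * B2 * sd.Ppᵀ)
        + sd.Pm * (sqW * Matrix.diagonal sd.gm * sqW) * sd.Pmᵀ := by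
    simp only [SpecDecomp.Dmat, psqrt_eq hA, psqrt_eq hW, hsqA, hsqW, hB1, hB2, hγdef]
  -- block decomposition of X and 1
  have hsplitX : X = sd.Pp * Ap * sd.Ppᵀ + sd.Pp * B1 * sd.Pmᵀ
      + sd.Pm * B2 * sd.Ppᵀ + sd.Pm * Cm * sd.Pmᵀ := by
    rw [hAp, hB1, hB2, hCm]
    have h1 : (sd.Pp * sd.Ppᵀ + sd.Pm * sd.Pmᵀ) * X * (sd.Pp * sd.Ppᵀ + sd.Pm * sd.Pmᵀ) = X := by
      rw [sd.hPPT, Matrix.one_mul, Matrix.mul_one]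
    conv_lhs => rw [← h1]
    simp only [Matrix.add_mul, Matrix.mul_add, Matrix.mul_assoc]
    abel
  have hsplit1 : (1 : Matrix (Fin n) (Fin n) ℝ)
      = sd.Pp * (1 : Matrix (Fin sd.np) (Fin sd.np) ℝ) * sd.Ppᵀ
        + sd.Pm * (1 : Matrix (Fin sd.nm) (Fin sd.nm) ℝ) * sd.Pmᵀ := by
    rw [Matrix.mul_one, Matrix.mul_one]
    exact sd.hPPT.symm
  -- key identities
  have hkey1 : X - γ⁻¹ • sd.Dmat X
      = sd.Pp * (Ap - γ⁻¹ • (sqA * Matrix.diagonal sd.gp * sqA)) * sd.Ppᵀ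
        + sd.Pm * (Cm - γ⁻¹ • (sqW * Matrix.diagonal sd.gm * sqW)) * sd.Pmᵀ := by
    rw [hDmat]
    conv_lhs => rw [hsplitX]
    simp only [smul_add, smul_smul, inv_mul_cancel₀ hγ0, one_smul,
      Matrix.mul_sub, Matrix.sub_mul, Matrix.mul_smul, Matrix.smul_mul]
    abel
  have hkey2 : 1 - X + γ⁻¹ • sd.Dmat X
      = sd.Pp * ((1 - Ap) + γ⁻¹ • (sqA * Matrix.diagonal sd.gp * sqA)) * sd.Ppᵀ
        + sd.Pm * ((1 - Cm) + γ⁻¹ • (sqW * Matrix.diagonal sd.gm * sqW)) * sd.Pmᵀ := by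
    rw [hDmat]
    conv_lhs => rw [hsplitX, hsplit1]
    simp only [smul_add, smul_smul, inv_mul_cancel₀ hγ0, one_smul,
      Matrix.mul_sub, Matrix.sub_mul, Matrix.mul_add, Matrix.add_mul,
      Matrix.mul_smul, Matrix.smul_mul]
    abel
  -- positivity of the four blocks
  have hγinv : (0 : ℝ) ≤ γ⁻¹ := inv_nonneg.mpr hγ.le
  have hPSD1a : (Ap - γ⁻¹ • (sqA * Matrix.diagonal sd.gp * sqA)).PosSemidef := by
    rw [hApV, hsqA, smul_sandwich, sqrt_sandwich_sub]
    refine sandwich_psd hA _ fun i => ?_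
    have h1 : γ⁻¹ * sd.gp i ≤ γ⁻¹ * γ := mul_le_mul_of_nonneg_left (hgp_le i) hγinv
    rw [inv_mul_cancel₀ hγ0] at h1
    linarith
  have hPSD1b : (Cm - γ⁻¹ • (sqW * Matrix.diagonal sd.gm * sqW)).PosSemidef := by
    rw [hsqW, smul_sandwich, sub_eq_add_neg, neg_sandwich]
    refine hCpsd.add (sandwich_psd hW _ fun j => ?_)
    have := sd.hgm_nonpos j
    have h1 : γ⁻¹ * sd.gm j ≤ 0 := mul_nonpos_of_nonneg_of_nonpos hγinv this
    linarith
  have hPSD2a : ((1 - Ap) + γ⁻¹ • (sqA * Matrix.diagonal sd.gp * sqA)).PosSemidef := by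
    rw [hsqA, smul_sandwich]
    exact hIAp.add (sandwich_psd hA _ fun i =>
      mul_nonneg hγinv (sd.hgp_pos i).le)
  have hPSD2b : ((1 - Cm) + γ⁻¹ • (sqW * Matrix.diagonal sd.gm * sqW)).PosSemidef := by
    rw [hCmV, hsqW, smul_sandwich, sqrt_sandwich_add]
    refine sandwich_psd hW _ fun j => ?_
    have h1 : γ⁻¹ * (-γ) ≤ γ⁻¹ * sd.gm j := mul_le_mul_of_nonneg_left (hgm_ge j) hγinv
    have h2 : γ⁻¹ * γ = 1 := inv_mul_cancel₀ hγ0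
    nlinarith
  -- conclude
  have r1 : (X - γ⁻¹ • sd.Dmat X).PosSemidef := by
    rw [hkey1]
    exact (psd_conj hPSD1a sd.Pp).add (psd_conj hPSD1b sd.Pm)
  have r2 : (1 - X + γ⁻¹ • sd.Dmat X).PosSemidef := by
    rw [hkey2]
    exact (psd_conj hPSD2a sd.Pp).add (psd_conj hPSD2b sd.Pm)
  have hsub : (1 : Matrix (Fin n) (Fin n) ℝ) - (X - γ⁻¹ • sd.Dmat X)
      = 1 - X + γ⁻¹ • sd.Dmat X := by abel
  exact ⟨r1, r2, r1, by rw [hsub]; exact r2⟩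


end BoxSDP
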